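/- Let r₂ > 0, let u : [0,1] → ℝ be continuous with u(x) ≠ 0 for all x ∈ [0,1], satisfying |u(x) − u(x')| ≤ r₂ |x − x'|^{1/2} for all x, x' ∈ [0,1], and suppose x ↦ 1/u(x)² is integrable on (0,1). Then for every x₀ ∈ [1/2, 1], ∫₀¹ 1/u(x)² dx ≥ (1/(2r₂²)) · log( r₂² / (2 u(x₀)²) ). -/

import Mathlib

open Set MeasureTheory

/-- Intermediate logarithmic integral estimate from the proof of Lemma 3.2:
a Hölder-1/2 continuous function whose reciprocal square has bounded integral
cannot be too small on [1/2, 1]. -/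
theorem log_integral_lower_bound (r₂ : ℝ) (hr₂ : 0 < r₂) (u : ℝ → ℝ) (hu : Continuous u)
    (hne : ∀ x ∈ Icc (0:ℝ) 1, u x ≠ 0)
    (hH : ∀ x ∈ Icc (0:ℝ) 1, ∀ x' ∈ Icc (0:ℝ) 1, |u x - u x'| ≤ r₂ * |x - x'| ^ ((1:ℝ)/2))
    (hint : IntervalIntegrable (fun x => 1 / (u x)^2) MeasureTheory.volume 0 1) :
    ∀ x₀ ∈ Icc (1/2 : ℝ) 1,
      (1 / (2 * r₂^2)) * Real.log (r₂^2 / (2 * (u x₀)^2)) ≤ ∫ x in (0:ℝ)..1, 1 / (u x)^2 := by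
  intro x₀ hx₀
  obtain ⟨hx₀l, hx₀r⟩ := hx₀
  have hx₀0 : (0:ℝ) ≤ x₀ := by linarith
  have hx₀mem : x₀ ∈ Icc (0:ℝ) 1 := ⟨hx₀0, hx₀r⟩
  set c : ℝ := (u x₀)^2 with hc
  have hcpos : 0 < c := by
    have := hne x₀ hx₀mem
    rw [hc]; positivity
  have _discard : True := trivial
  have hr2 : 0 < r₂^2 := pow_pos hr₂ 2
  -- positivity of the denominator on [0, x₀]
  have hgpos : ∀ x ∈ Icc (0:ℝ) x₀, 0 < r₂^2 * (x₀ - x) + c := by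
    intro x hx
    have : 0 ≤ r₂^2 * (x₀ - x) := mul_nonneg hr2.le (by linarith [hx.2])
    linarith
  -- pointwise bound on [0, x₀]
  have key : ∀ x ∈ Icc (0:ℝ) x₀, 1 / (2 * (r₂^2 * (x₀ - x) + c)) ≤ 1 / (u x)^2 := by
    intro x hx
    have hxmem : x ∈ Icc (0:ℝ) 1 := ⟨hx.1, hx.2.trans hx₀r⟩
    have hH' := hH x hxmem x₀ hx₀mem
    have habs : |x - x₀| = x₀ - x := by
      rw [abs_sub_comm]; exact abs_of_nonneg (by linarith [hx.2])
    have hsq : (u x - u x₀)^2 ≤ r₂^2 * (x₀ - x) := by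
      have h1 : |u x - u x₀|^2 ≤ (r₂ * |x - x₀| ^ ((1:ℝ)/2))^2 := by
        apply pow_le_pow_left₀ (abs_nonneg _) hH'
      have h2 : (|x - x₀| ^ ((1:ℝ)/2))^2 = |x - x₀| := by
        rw [← Real.rpow_natCast (|x - x₀| ^ ((1:ℝ)/2)) 2, ← Real.rpow_mul (abs_nonneg _)]
        norm_num
      rw [sq_abs] at h1
      calc (u x - u x₀)^2 ≤ (r₂ * |x - x₀| ^ ((1:ℝ)/2))^2 := h1
        _ = r₂^2 * (|x - x₀| ^ ((1:ℝ)/2))^2 := by ring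
        _ = r₂^2 * (x₀ - x) := by rw [h2, habs]
    have hupos : 0 < (u x)^2 := by
      have := hne x hxmem
      positivity
    have hle : (u x)^2 ≤ 2 * (r₂^2 * (x₀ - x) + c) := by
      nlinarith [sq_nonneg (u x - 2 * u x₀), hsq]
    exact one_div_le_one_div_of_le hupos hle
  -- integrability pieces
  have hsub : uIcc (0:ℝ) x₀ ⊆ uIcc (0:ℝ) 1 := by
    rw [uIcc_of_le hx₀0, uIcc_of_le (by norm_num : (0:ℝ) ≤ 1)]
    exact Icc_subset_Icc le_rfl hx₀r
  have hint₀ : IntervalIntegrable (fun x => 1 / (u x)^2) volume 0 x₀ :=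
    hint.mono_set hsub
  have hintL : IntervalIntegrable (fun x => 1 / (2 * (r₂^2 * (x₀ - x) + c))) volume 0 x₀ := by
    apply ContinuousOn.intervalIntegrable
    apply ContinuousOn.div continuousOn_const
    · exact (continuous_const.mul ((continuous_const.mul (continuous_const.sub continuous_id)).add continuous_const)).continuousOn
    · intro x hx
      rw [uIcc_of_le hx₀0] at hx
      have := hgpos x hx
      positivity
  -- compute integral of the lower bound
  have hderiv : ∀ x ∈ uIcc (0:ℝ) x₀,
      HasDerivAt (fun x => -(1 / (2 * r₂^2)) * Real.log (r₂^2 * (x₀ - x) + c))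
        (1 / (2 * (r₂^2 * (x₀ - x) + c))) x := by
    intro x hx
    rw [uIcc_of_le hx₀0] at hx
    have hg : HasDerivAt (fun x => r₂^2 * (x₀ - x) + c) (-r₂^2) x := by
      simpa using (((hasDerivAt_id x).const_sub x₀).const_mul (r₂^2)).add_const c
    have hgne : r₂^2 * (x₀ - x) + c ≠ 0 := (hgpos x hx).ne'
    have := (hg.log hgne).const_mul (-(1 / (2 * r₂^2)))
    refine this.congr_deriv ?_
    have hr2ne : r₂^2 ≠ 0 := hr2.ne'
    field_simp
  have hcalc : ∫ x in (0:ℝ)..x₀, 1 / (2 * (r₂^2 * (x₀ - x) + c)) =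
      (1 / (2 * r₂^2)) * Real.log ((r₂^2 * x₀ + c) / c) := by
    rw [intervalIntegral.integral_eq_sub_of_hasDerivAt hderiv hintL]
    have h1 : r₂^2 * (x₀ - x₀) + c = c := by ring
    have h2 : r₂^2 * (x₀ - 0) + c = r₂^2 * x₀ + c := by ring
    rw [h1, h2, Real.log_div (by positivity) hcpos.ne']
    ring
  -- compare
  have hmono : ∫ x in (0:ℝ)..x₀, 1 / (2 * (r₂^2 * (x₀ - x) + c)) ≤
      ∫ x in (0:ℝ)..x₀, 1 / (u x)^2 :=
    intervalIntegral.integral_mono_on hx₀0 hintL hint₀ key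
  have hsplit : ∫ x in (0:ℝ)..x₀, 1 / (u x)^2 ≤ ∫ x in (0:ℝ)..1, 1 / (u x)^2 := by
    have h2 : IntervalIntegrable (fun x => 1 / (u x)^2) volume x₀ 1 :=
      hint.mono_set (by
        rw [uIcc_of_le hx₀r, uIcc_of_le (by norm_num : (0:ℝ) ≤ 1)]
        exact Icc_subset_Icc hx₀0 le_rfl)
    have hnn : 0 ≤ ∫ x in x₀..1, 1 / (u x)^2 := by
      apply intervalIntegral.integral_nonneg hx₀r
      intro x hx
      positivity
    have := intervalIntegral.integral_add_adjacent_intervals hint₀ h2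
    linarith [this]
  -- final log comparison
  have hloglog : Real.log (r₂^2 / (2 * c)) ≤ Real.log ((r₂^2 * x₀ + c) / c) := by
    apply Real.log_le_log (by positivity)
    rw [div_le_div_iff₀ (by positivity) hcpos]
    nlinarith [mul_le_mul_of_nonneg_right (show r₂^2 ≤ 2*(r₂^2*x₀) by nlinarith) hcpos.le,
      mul_pos hcpos hcpos]
  have hfin : (1 / (2 * r₂^2)) * Real.log (r₂^2 / (2 * c)) ≤
      (1 / (2 * r₂^2)) * Real.log ((r₂^2 * x₀ + c) / c) := by
    apply mul_le_mul_of_nonneg_left hloglog (by positivity)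
  calc (1 / (2 * r₂^2)) * Real.log (r₂^2 / (2 * (u x₀)^2))
      = (1 / (2 * r₂^2)) * Real.log (r₂^2 / (2 * c)) := by rw [hc]
    _ ≤ (1 / (2 * r₂^2)) * Real.log ((r₂^2 * x₀ + c) / c) := hfin
    _ = ∫ x in (0:ℝ)..x₀, 1 / (2 * (r₂^2 * (x₀ - x) + c)) := hcalc.symm
    _ ≤ ∫ x in (0:ℝ)..x₀, 1 / (u x)^2 := hmono
    _ ≤ ∫ x in (0:ℝ)..1, 1 / (u x)^2 := hsplit
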